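/- arXiv:2509.22056 — 3 statements merged into one kernel-verified Lean document; each statement's English description precedes it below -/
import Mathlib

section
/- Suppose a sequence $a_t$ ($t \geq 0$) of real numbers satisfies the recursion $a_{t+1} = a_t + c/(1 + b e^{a_t})$ for some constants $0 \leq c \leq 1$ and $b \geq 0$. Let $x_t$ be the unique real solution of $x_t + b e^{x_t} = ct + a_0 + b e^{a_0}$. Then for all $t \geq 0$, $x_t \leq a_t \leq x_t + c/(1 + b e^{a_0})$. -/
open Real

theorem stmt_0 (b c : ℝ) (hc0 : 0 ≤ c) (hc1 : c ≤ 1) (hb : 0 ≤ b)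
    (a x : ℕ → ℝ)
    (ha : ∀ t : ℕ, a (t + 1) = a t + c / (1 + b * Real.exp (a t)))
    (hx : ∀ t : ℕ, x t + b * Real.exp (x t) = c * t + a 0 + b * Real.exp (a 0)) :
    ∀ t : ℕ, x t ≤ a t ∧ a t ≤ x t + c / (1 + b * Real.exp (a 0)) := by
  set f : ℝ → ℝ := fun y => y + b * Real.exp y with hf
  have hfmono : StrictMono f := by
    have h1 : Monotone fun y : ℝ => b * Real.exp y :=
      fun u v huv => by
        have := Real.exp_le_exp.mpr huv
        exact mul_le_mul_of_nonneg_left this hb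
    exact strictMono_id.add_monotone h1
  have hpos : ∀ y : ℝ, 0 < 1 + b * Real.exp y := by
    intro y
    have : 0 ≤ b * Real.exp y := mul_nonneg hb (Real.exp_pos y).le
    linarith
  set δ := c / (1 + b * Real.exp (a 0)) with hδ
  have hδ0 : 0 ≤ δ := div_nonneg hc0 (hpos _).le
  have hamono : ∀ t, a 0 ≤ a t := by
    intro t
    induction t with
    | zero => exact le_refl _
    | succ n ih =>
      rw [ha n]
      have := div_nonneg hc0 (hpos (a n)).le
      linarith
  have key : ∀ t : ℕ, c * t + f (a 0) ≤ f (a t) ∧ f (a t - δ) ≤ c * t + f (a 0) := by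
    intro t
    induction t with
    | zero =>
      constructor
      · simp
      · simp only [Nat.cast_zero, mul_zero, zero_add]
        exact hfmono.monotone (by linarith)
    | succ n ih =>
      obtain ⟨ihl, ihu⟩ := ih
      set Δ := c / (1 + b * Real.exp (a n)) with hΔ
      have hΔ0 : 0 ≤ Δ := div_nonneg hc0 (hpos _).le
      have hΔc : Δ * (1 + b * Real.exp (a n)) = c :=
        div_mul_cancel₀ c (hpos (a n)).ne'
      have hΔδ : Δ ≤ δ := by
        apply div_le_div_of_nonneg_left hc0 (hpos (a 0))
        have := Real.exp_le_exp.mpr (hamono n)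
        have := mul_le_mul_of_nonneg_left this hb
        linarith
      have han1 : a (n + 1) = a n + Δ := ha n
      have hE : (0:ℝ) ≤ b * Real.exp (a n) := mul_nonneg hb (Real.exp_pos _).le
      have hexpΔ : 1 + Δ ≤ Real.exp Δ := by linarith [Real.add_one_le_exp Δ]
      constructor
      · -- lower
        have : f (a (n+1)) = a n + Δ + b * Real.exp (a n) * Real.exp Δ := by
          rw [hf]; simp only []
          rw [han1, Real.exp_add]; ring
        rw [this]
        have h2 : b * Real.exp (a n) * (1 + Δ) ≤ b * Real.exp (a n) * Real.exp Δ :=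
          mul_le_mul_of_nonneg_left hexpΔ hE
        have : f (a n) = a n + b * Real.exp (a n) := rfl
        push_cast
        nlinarith [ihl]
      · -- upper
        have hfe : f (a (n+1) - δ) = a n + Δ - δ + b * Real.exp (a n - δ) * Real.exp Δ := by
          rw [hf]; simp only []
          rw [han1]
          rw [show a n + Δ - δ = (a n - δ) + Δ by ring, Real.exp_add]
          ring
        rw [hfe]
        have hfeo : f (a n - δ) = a n - δ + b * Real.exp (a n - δ) := rfl
        rw [hfeo] at ihu
        have hE' : (0:ℝ) ≤ b * Real.exp (a n - δ) := mul_nonneg hb (Real.exp_pos _).le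
        -- e^Δ - 1 ≤ Δ e^Δ : from 1 - Δ ≤ e^{-Δ}, multiply by e^Δ
        have h1 : (1 - Δ) ≤ Real.exp (-Δ) := by
          have := Real.add_one_le_exp (-Δ); linarith
        have h2 : Real.exp (-Δ) * Real.exp Δ = 1 := by
          rw [← Real.exp_add]; simp
        have h3 : Real.exp Δ - 1 ≤ Δ * Real.exp Δ := by
          nlinarith [Real.exp_pos Δ]
        have h4 : Real.exp Δ ≤ Real.exp δ := Real.exp_le_exp.mpr hΔδ
        -- so b e^{an-δ} (e^Δ - 1) ≤ b e^{an-δ} Δ e^δ = Δ b e^{an}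
        have h5 : Real.exp (a n - δ) * Real.exp δ = Real.exp (a n) := by
          rw [← Real.exp_add]; ring_nf
        have h6 : b * Real.exp (a n - δ) * (Real.exp Δ - 1) ≤ Δ * (b * Real.exp (a n)) := by
          calc b * Real.exp (a n - δ) * (Real.exp Δ - 1)
              ≤ b * Real.exp (a n - δ) * (Δ * Real.exp δ) := by
                apply mul_le_mul_of_nonneg_left _ hE'
                calc Real.exp Δ - 1 ≤ Δ * Real.exp Δ := h3
                  _ ≤ Δ * Real.exp δ := mul_le_mul_of_nonneg_left h4 hΔ0
            _ = Δ * (b * Real.exp (a n)) := by rw [← h5]; ring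
          
        push_cast
        nlinarith
  intro t
  have hfx : f (x t) = c * t + f (a 0) := by
    rw [hf]; simp only []
    rw [hx t]; ring
  obtain ⟨kl, ku⟩ := key t
  constructor
  · have : f (x t) ≤ f (a t) := by rw [hfx]; exact kl
    exact hfmono.le_iff_le.mp this
  · have : f (a t - δ) ≤ f (x t) := by rw [hfx]; exact ku
    have := hfmono.le_iff_le.mp this
    linarith
end

section
/- Let $x_t$ be the unique solution of $x_t + b e^{x_t} = ct + b$ where $b = e^{-\kappa/2}$ with $0 \leq \kappa \leq 0.1$ and $c = \frac{3\eta\sigma_p^2 d}{2nm} > 0$. Then for all $t \geq 0$, $\log\left(\frac{\eta\sigma_p^2 d}{8nm} t + \frac{2}{3}\right) \leq x_t \leq \log\left(\frac{2\eta\sigma_p^2 d}{nm} t + 1\right)$. -/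
open Real

theorem stmt_2 (κ η σp d n m : ℝ)
    (hκ0 : 0 ≤ κ) (hκ1 : κ ≤ 0.1)
    (hη : 0 < η) (hσ : 0 < σp) (hd : 0 < d) (hn : 0 < n) (hm : 0 < m)
    (b c : ℝ) (hb : b = Real.exp (-κ / 2)) (hc : c = 3 * η * σp ^ 2 * d / (2 * n * m))
    (x : ℝ → ℝ)
    (hx : ∀ t : ℝ, 0 ≤ t → x t + b * Real.exp (x t) = c * t + b) :
    ∀ t : ℝ, 0 ≤ t →
      Real.log (η * σp ^ 2 * d / (8 * n * m) * t + 2 / 3) ≤ x t ∧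
        x t ≤ Real.log (2 * η * σp ^ 2 * d / (n * m) * t + 1) := by
  have hbpos : 0 < b := hb ▸ Real.exp_pos _
  have hb1 : b ≤ 1 := by
    rw [hb]; exact Real.exp_le_one_iff.mpr (by linarith)
  have hb34 : 3 / 4 ≤ b := by
    rw [hb]
    have h := Real.add_one_le_exp (-κ / 2)
    linarith
  have hcpos : 0 < c := by rw [hc]; positivity
  have mono : ∀ u v : ℝ, u + b * Real.exp u ≤ v + b * Real.exp v → u ≤ v := by
    intro u v h
    by_contra hlt
    push_neg at hlt
    have h2 : Real.exp v < Real.exp u := Real.exp_lt_exp.mpr hlt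
    nlinarith [Real.exp_pos u, Real.exp_pos v]
  intro t ht
  have hy := hx t ht
  have hs : 0 ≤ c * t := by positivity
  constructor
  · have hL : η * σp ^ 2 * d / (8 * n * m) * t + 2 / 3 = c / 12 * t + 2 / 3 := by
      rw [hc]; field_simp; ring
    rw [hL]
    have hLpos : 0 < c / 12 * t + 2 / 3 := by nlinarith
    have hlog : Real.log (c / 12 * t + 2 / 3) ≤ c / 12 * t + 2 / 3 - 1 :=
      Real.log_le_sub_one_of_pos hLpos
    apply mono
    rw [Real.exp_log hLpos, hy]
    nlinarith [mul_nonneg (by linarith : (0:ℝ) ≤ 1 - b) hs]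
  · have hU : 2 * η * σp ^ 2 * d / (n * m) * t + 1 = 4 / 3 * c * t + 1 := by
      rw [hc]; field_simp; ring
    rw [hU]
    have hUpos : 0 < 4 / 3 * c * t + 1 := by nlinarith
    have hlog : 0 ≤ Real.log (4 / 3 * c * t + 1) := Real.log_nonneg (by linarith)
    apply mono
    rw [hy, Real.exp_log hUpos]
    nlinarith [mul_nonneg (by linarith : (0:ℝ) ≤ b - 3 / 4) hs]
end

section
/- Let $g : \mathbb{R}^d \to \mathbb{R}$ and suppose there exist $\xi' \in \mathbb{R}^d$ and $M > 0$ such that $g(\xi + \xi') - g(\xi) + g(-\xi + \xi') - g(-\xi) \geq 4M$ for all $\xi$ in a set of full measure. Then for $\xi \sim \mathcal{N}(0, \sigma^2 I_d)$ with $\|\xi'\|_2 \leq 0.02\sigma$, letting $\Omega = \{\xi : |g(\xi)| \geq M\}$, we have $\mathbb{P}(\xi \in \Omega) \geq 0.24$. -/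
open MeasureTheory ProbabilityTheory Real Finset
open scoped NNReal ENNReal


lemma lintegral_fin_prod : ∀ {n : ℕ} (μ : Fin n → Measure ℝ), (∀ i, SigmaFinite (μ i)) →
    ∀ (f : Fin n → ℝ → ℝ≥0∞), (∀ i, Measurable (f i)) →
    ∫⁻ x : Fin n → ℝ, ∏ i, f i (x i) ∂Measure.pi μ = ∏ i, ∫⁻ y, f i y ∂μ i := by
  intro n
  induction n with
  | zero =>
      intro μ _ f _
      simp [lintegral_one, Measure.pi_univ]
  | succ n ih =>
      intro μ hμ f hf
      haveI := hμ
      have mp := (measurePreserving_piFinSuccAbove μ 0).symm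
      have hFm : Measurable fun x : Fin (n+1) → ℝ => ∏ i, f i (x i) :=
        Finset.measurable_prod _ fun i _ => (hf i).comp (measurable_pi_apply i)
      rw [← mp.lintegral_comp hFm]
      have key : ∀ p : ℝ × (Fin n → ℝ),
          (∏ i, f i (((MeasurableEquiv.piFinSuccAbove (fun _ => ℝ) 0).symm p) i))
            = f 0 p.1 * ∏ j : Fin n, f j.succ (p.2 j) := by
        intro p
        simp [MeasurableEquiv.piFinSuccAbove_symm_apply, Fin.insertNthEquiv,
          Fin.insertNth_zero, Fin.prod_univ_succ, Fin.zero_succAbove]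
      simp_rw [key]
      rw [lintegral_prod_mul (f := f 0) (g := fun y : Fin n → ℝ => ∏ j : Fin n, f j.succ (y j))
        (hf 0).aemeasurable
        ((Finset.measurable_prod Finset.univ fun j _ =>
          (hf j.succ).comp (measurable_pi_apply j)).aemeasurable),
        ih _ (fun j => inferInstance) _ (fun j => hf j.succ), Fin.prod_univ_succ]
      simp [Fin.zero_succAbove]


lemma gaussianPDFReal_mul_exp (σ : ℝ≥0) (hσ : σ ≠ 0) (a y : ℝ) :
    gaussianPDFReal 0 (σ ^ 2) y * Real.exp (a * y)
      = Real.exp (a ^ 2 * (σ:ℝ) ^ 2 / 2) * gaussianPDFReal (a * (σ:ℝ) ^ 2) (σ ^ 2) y := by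
  have hs : ((σ:ℝ) ^ 2) ≠ 0 := by positivity
  simp only [gaussianPDFReal]
  push_cast
  conv_lhs => rw [mul_assoc, ← Real.exp_add]
  conv_rhs => rw [mul_comm, mul_assoc, ← Real.exp_add]
  congr 1
  field_simp
  ring

lemma gaussianPDFReal_eq_ratio (σ : ℝ≥0) (hσ : σ ≠ 0) (m y : ℝ) :
    gaussianPDFReal m (σ ^ 2) y
      = gaussianPDFReal 0 (σ ^ 2) y * Real.exp ((m * y - m ^ 2 / 2) / (σ:ℝ) ^ 2) := by
  have hs : ((σ:ℝ) ^ 2) ≠ 0 := by positivity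
  simp only [gaussianPDFReal]
  push_cast
  conv_rhs => rw [mul_assoc, ← Real.exp_add]
  congr 1
  field_simp
  ring


lemma gauss_exp_lintegral (σ : ℝ≥0) (hσ : σ ≠ 0) (a : ℝ) :
    ∫⁻ y, ENNReal.ofReal (Real.exp (a * y)) ∂(gaussianReal 0 (σ ^ 2))
      = ENNReal.ofReal (Real.exp (a ^ 2 * (σ:ℝ) ^ 2 / 2)) := by
  have hv : (σ ^ 2 : ℝ≥0) ≠ 0 := pow_ne_zero _ hσ
  rw [gaussianReal_of_var_ne_zero _ hv,
    lintegral_withDensity_eq_lintegral_mul _ (measurable_gaussianPDF _ _)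
      (by fun_prop)]
  have hpt : (fun y => gaussianPDF 0 (σ^2) y * ENNReal.ofReal (Real.exp (a*y)))
      = fun y => ENNReal.ofReal (Real.exp (a^2 * (σ:ℝ)^2/2)) * gaussianPDF (a * (σ:ℝ)^2) (σ^2) y := by
    funext y
    rw [gaussianPDF, gaussianPDF, ← ENNReal.ofReal_mul (gaussianPDFReal_nonneg _ _ _),
      gaussianPDFReal_mul_exp σ hσ, ENNReal.ofReal_mul (Real.exp_nonneg _)]
  simp only [Pi.mul_apply]
  rw [hpt, lintegral_const_mul _ (measurable_gaussianPDF _ _), lintegral_gaussianPDF_eq_one _ hv,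
    mul_one]

lemma gaussianReal_shift (σ : ℝ≥0) (hσ : σ ≠ 0) (m : ℝ) :
    gaussianReal m (σ ^ 2) = (gaussianReal 0 (σ ^ 2)).withDensity
      (fun y => ENNReal.ofReal (Real.exp ((m * y - m ^ 2 / 2) / (σ:ℝ) ^ 2))) := by
  have hv : (σ ^ 2 : ℝ≥0) ≠ 0 := pow_ne_zero _ hσ
  rw [gaussianReal_of_var_ne_zero _ hv, gaussianReal_of_var_ne_zero _ hv,
    ← withDensity_mul _ (measurable_gaussianPDF _ _) (by fun_prop)]
  congr 1
  funext y
  simp only [Pi.mul_apply, gaussianPDF]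
  rw [← ENNReal.ofReal_mul (gaussianPDFReal_nonneg _ _ _), ← gaussianPDFReal_eq_ratio σ hσ]

lemma gaussianReal_neg_invariant (σ : ℝ≥0) :
    (gaussianReal 0 (σ ^ 2)).map (fun y : ℝ => -y) = gaussianReal 0 (σ ^ 2) := by
  have h := gaussianReal_map_const_mul (μ := 0) (v := σ ^ 2) (-1)
  have h1 : (⟨(-1:ℝ)^2, sq_nonneg _⟩ : ℝ≥0) = 1 := by ext; norm_num
  simp only [mul_zero, h1, one_mul] at h
  have h' : Measure.map (fun x : ℝ => -1 * x) (gaussianReal 0 (σ ^ 2)) = gaussianReal 0 (σ ^ 2) := by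
    rw [h]; congr 1; ext; simp
  refine Eq.trans ?_ h'
  congr 1
  funext y
  simp

set_option maxHeartbeats 1000000 in
theorem stmt_8 (d : ℕ) (σ : ℝ≥0) (hσ : 0 < σ)
    (g : (Fin d → ℝ) → ℝ) (hg : Measurable g)
    (ξ' : Fin d → ℝ) (M : ℝ) (hM : 0 < M)
    (hnorm : Real.sqrt (∑ i : Fin d, ξ' i ^ 2) ≤ 0.02 * (σ : ℝ))
    (hlb : ∀ᵐ ξ ∂(Measure.pi fun _ : Fin d => gaussianReal 0 (σ ^ 2)),
      g (ξ + ξ') - g ξ + (g (-ξ + ξ') - g (-ξ)) ≥ 4 * M) :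
    (Measure.pi fun _ : Fin d => gaussianReal 0 (σ ^ 2)) {ξ | M ≤ |g ξ|}
      ≥ ENNReal.ofReal 0.24 := by
  have hσ0 : σ ≠ 0 := hσ.ne'
  set s : ℝ := (σ:ℝ) ^ 2 with hs_def
  have hs : (0:ℝ) < s := by positivity
  set c : ℝ := ∑ i, ξ' i ^ 2 with hc_def
  have hc0 : (0:ℝ) ≤ c := Finset.sum_nonneg fun i _ => sq_nonneg _
  have hc : c ≤ 0.0004 * s := by
    nlinarith [Real.sq_sqrt hc0, Real.sqrt_nonneg c, hσ.le, hnorm]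
  set μ : Measure (Fin d → ℝ) := Measure.pi fun _ : Fin d => gaussianReal 0 (σ ^ 2) with hμ
  haveI : IsProbabilityMeasure μ := by rw [hμ]; infer_instance
  set A : Set (Fin d → ℝ) := {ξ | M ≤ |g ξ|} with hA
  have hAm : MeasurableSet A := measurableSet_le measurable_const hg.abs
  set ν : Measure (Fin d → ℝ) := Measure.pi fun i : Fin d => gaussianReal (ξ' i) (σ ^ 2) with hν
  haveI : IsProbabilityMeasure ν := by rw [hν]; infer_instance
  -- the log-likelihood ratio
  set l : (Fin d → ℝ) → ℝ := fun x => (∑ i, ξ' i * x i - c / 2) / s with hl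
  have hlm : Measurable l := by
    apply Measurable.div_const
    exact (Finset.measurable_sum _ fun i _ =>
      (by fun_prop : Measurable fun x : Fin d → ℝ => ξ' i * x i)).sub_const _
  -- MGF-type computation
  have mgf : ∀ t : ℝ, ∫⁻ x, ENNReal.ofReal (Real.exp (t * l x)) ∂μ
      = ENNReal.ofReal (Real.exp ((t ^ 2 - t) * c / (2 * s))) := by
    intro t
    have hpt : ∀ x : Fin d → ℝ, ENNReal.ofReal (Real.exp (t * l x))
        = ENNReal.ofReal (Real.exp (-(t * c) / (2 * s)))
          * ∏ i, ENNReal.ofReal (Real.exp (t * ξ' i / s * x i)) := by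
      intro x
      rw [← ENNReal.ofReal_prod_of_nonneg (fun i _ => Real.exp_nonneg _),
        ← Real.exp_sum, ← ENNReal.ofReal_mul (Real.exp_nonneg _), ← Real.exp_add]
      congr 2
      have h1 : ∑ i, t * ξ' i / s * x i = t / s * ∑ i, ξ' i * x i := by
        rw [Finset.mul_sum]
        exact Finset.sum_congr rfl fun i _ => by field_simp
      rw [h1, hl]
      field_simp
      ring
    simp_rw [hpt]
    rw [lintegral_const_mul _ (Finset.measurable_prod _ fun i _ =>
        ((measurable_pi_apply i).const_mul _).exp.ennreal_ofReal), hμ,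
      lintegral_fin_prod _ (fun i => inferInstance)
        (fun i y => ENNReal.ofReal (Real.exp (t * ξ' i / s * y)))
        (fun i => (measurable_id.const_mul _).exp.ennreal_ofReal)]
    simp_rw [gauss_exp_lintegral σ hσ0]
    rw [← ENNReal.ofReal_prod_of_nonneg (fun i _ => Real.exp_nonneg _),
      ← Real.exp_sum, ← ENNReal.ofReal_mul (Real.exp_nonneg _), ← Real.exp_add]
    congr 2
    rw [← hs_def]
    have h2 : ∑ i, (t * ξ' i / s) ^ 2 * s / 2 = c * (t ^ 2 / (2 * s)) := by
      rw [hc_def, Finset.sum_mul]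
      exact Finset.sum_congr rfl fun i _ => by field_simp
    rw [h2]
    field_simp
    ring

  -- coordinate density functions
  set r : Fin d → ℝ → ℝ≥0∞ :=
    fun i y => ENNReal.ofReal (Real.exp ((ξ' i * y - ξ' i ^ 2 / 2) / s)) with hr
  have hrm : ∀ i, Measurable (r i) := fun i =>
    (((measurable_id.const_mul _).sub_const _).div_const _).exp.ennreal_ofReal
  have hRprod : ∀ x : Fin d → ℝ, ENNReal.ofReal (Real.exp (l x)) = ∏ i, r i (x i) := by
    intro x
    rw [hr, ← ENNReal.ofReal_prod_of_nonneg (fun i _ => Real.exp_nonneg _), ← Real.exp_sum]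
    congr 2
    rw [hl, hc_def]
    show (∑ i, ξ' i * x i - (∑ i, ξ' i ^ 2) / 2) / s = _
    rw [← Finset.sum_div, Finset.sum_sub_distrib, ← Finset.sum_div]
  have hνd : ν = μ.withDensity fun x => ENNReal.ofReal (Real.exp (l x)) := by
    rw [hν, hμ]
    refine Measure.pi_eq fun t ht => ?_
    rw [withDensity_apply _ (MeasurableSet.univ_pi ht),
      ← lintegral_indicator (MeasurableSet.univ_pi ht)]
    have hind : ∀ x : Fin d → ℝ,
        (Set.pi Set.univ t).indicator (fun x => ENNReal.ofReal (Real.exp (l x))) x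
          = ∏ i, (t i).indicator (r i) (x i) := by
      intro x
      by_cases hx : x ∈ Set.pi Set.univ t
      · rw [Set.indicator_of_mem hx, hRprod]
        exact Finset.prod_congr rfl fun i _ => (Set.indicator_of_mem (hx i trivial) _).symm
      · rw [Set.indicator_of_notMem hx]
        rw [Set.mem_univ_pi] at hx; push_neg at hx
        obtain ⟨i, hi⟩ := hx
        exact (Finset.prod_eq_zero (Finset.mem_univ i) (Set.indicator_of_notMem hi _)).symm
    simp_rw [hind]
    rw [lintegral_fin_prod _ (fun i => inferInstance) _ (fun i => (hrm i).indicator (ht i))]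
    refine Finset.prod_congr rfl fun i _ => ?_
    rw [lintegral_indicator (ht i), ← withDensity_apply _ (ht i),
      ← gaussianReal_shift σ hσ0]
  have hνA : ν A = ∫⁻ x in A, ENNReal.ofReal (Real.exp (l x)) ∂μ := by
    rw [hνd, withDensity_apply _ hAm]
  -- measure-preserving maps
  have htrans : MeasurePreserving (fun x : Fin d → ℝ => x + ξ') μ ν := by
    rw [hμ, hν]
    exact measurePreserving_pi (fun _ : Fin d => gaussianReal 0 (σ ^ 2))
      (fun i => gaussianReal (ξ' i) (σ ^ 2)) (f := fun i y => y + ξ' i)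
      (fun i => ⟨measurable_id.add_const _, by
        rw [gaussianReal_map_add_const (ξ' i), zero_add]⟩)
  have hneg : MeasurePreserving (fun x : Fin d → ℝ => -x) μ μ := by
    rw [hμ]
    exact measurePreserving_pi (fun _ : Fin d => gaussianReal 0 (σ ^ 2))
      (fun _ : Fin d => gaussianReal 0 (σ ^ 2)) (f := fun i y => -y)
      (fun i => ⟨measurable_neg, gaussianReal_neg_invariant σ⟩)
  set S1 : Set (Fin d → ℝ) := (fun x : Fin d → ℝ => x + ξ') ⁻¹' A with hS1def
  have hS1m : MeasurableSet S1 := hAm.preimage htrans.measurable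
  set S3 : Set (Fin d → ℝ) := (fun x : Fin d → ℝ => -x) ⁻¹' S1 with hS3def
  set S4 : Set (Fin d → ℝ) := (fun x : Fin d → ℝ => -x) ⁻¹' A with hS4def
  have hS1 : μ S1 = ν A := htrans.measure_preimage hAm.nullMeasurableSet
  have hS3 : μ S3 = μ S1 := hneg.measure_preimage hS1m.nullMeasurableSet
  have hS4 : μ S4 = μ A := hneg.measure_preimage hAm.nullMeasurableSet
  -- pigeonhole
  have hcov : ∀ᵐ x ∂μ, x ∈ S1 ∪ A ∪ (S3 ∪ S4) := by
    filter_upwards [hlb] with x hx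
    by_contra hmem
    simp only [Set.mem_union, not_or] at hmem
    obtain ⟨⟨h1, h2⟩, h3, h4⟩ := hmem
    rw [hS1def] at h1
    rw [hS3def, hS1def] at h3
    rw [hS4def] at h4
    simp only [Set.mem_preimage, hA, Set.mem_setOf_eq, not_le] at h1 h2 h3 h4
    have b1 := le_abs_self (g (x + ξ'))
    have b2 := neg_abs_le (g x)
    have b3 := le_abs_self (g (-x + ξ'))
    have b4 := neg_abs_le (g (-x))
    linarith
  have hone : (1:ℝ≥0∞) ≤ μ S1 + μ A + (μ S3 + μ S4) := by
    have h0 : μ (S1 ∪ A ∪ (S3 ∪ S4))ᶜ = 0 := by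
      rw [Set.compl_def]
      exact (MeasureTheory.ae_iff).mp hcov
    calc (1:ℝ≥0∞) = μ Set.univ := measure_univ.symm
      _ = μ ((S1 ∪ A ∪ (S3 ∪ S4)) ∪ (S1 ∪ A ∪ (S3 ∪ S4))ᶜ) := by
          rw [Set.union_compl_self]
      _ ≤ μ (S1 ∪ A ∪ (S3 ∪ S4)) + μ (S1 ∪ A ∪ (S3 ∪ S4))ᶜ := measure_union_le _ _
      _ = μ (S1 ∪ A ∪ (S3 ∪ S4)) := by rw [h0, add_zero]
      _ ≤ μ (S1 ∪ A) + μ (S3 ∪ S4) := measure_union_le _ _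
      _ ≤ μ S1 + μ A + (μ S3 + μ S4) := add_le_add (measure_union_le _ _) (measure_union_le _ _)
  -- Cauchy-Schwarz bound on the density shift
  set ρ : ℝ := Real.exp (-(c / (8 * s))) with hρ
  have hρ0 : (0:ℝ) ≤ ρ := Real.exp_nonneg _
  have hρ1 : ρ ≤ 1 := by
    rw [hρ, ← Real.exp_zero]
    apply Real.exp_le_exp.mpr
    have : 0 ≤ c / (8 * s) := by positivity
    linarith
  have hIq : ∫⁻ x, ENNReal.ofReal (Real.exp (2⁻¹ * l x)) ∂μ = ENNReal.ofReal ρ := by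
    rw [mgf 2⁻¹, hρ]
    congr 2
    field_simp
    ring
  have hIR : ∫⁻ x, ENNReal.ofReal (Real.exp (l x)) ∂μ = 1 := by
    have h := mgf 1
    simp only [one_mul] at h
    rw [h]
    norm_num
  have hsq : ∀ x, Real.exp (2⁻¹ * l x) ^ 2 = Real.exp (l x) := by
    intro x
    rw [sq, ← Real.exp_add]
    congr 1
    ring
  have hqmeas : Measurable fun x => ENNReal.ofReal (Real.exp (2⁻¹ * l x)) :=
    (hlm.const_mul _).exp.ennreal_ofReal
  have hJp : ∫⁻ x, ENNReal.ofReal ((Real.exp (2⁻¹ * l x) + 1) ^ 2) ∂μ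
      = ENNReal.ofReal (2 + 2 * ρ) := by
    have hpt : ∀ x, ENNReal.ofReal ((Real.exp (2⁻¹ * l x) + 1) ^ 2)
        = ENNReal.ofReal (Real.exp (l x))
          + (ENNReal.ofReal (Real.exp (2⁻¹ * l x)) * 2 + 1) := by
      intro x
      rw [show (Real.exp (2⁻¹ * l x) + 1) ^ 2
          = Real.exp (l x) + (Real.exp (2⁻¹ * l x) * 2 + 1) by rw [← hsq x]; ring,
        ENNReal.ofReal_add (Real.exp_nonneg _) (by positivity),
        ENNReal.ofReal_add (by positivity) zero_le_one,
        ENNReal.ofReal_mul (Real.exp_nonneg _), ENNReal.ofReal_ofNat, ENNReal.ofReal_one]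
    simp_rw [hpt]
    rw [lintegral_add_left (hlm.exp.ennreal_ofReal), hIR,
      lintegral_add_right _ measurable_const, lintegral_mul_const _ hqmeas, hIq,
      lintegral_one, measure_univ,
      ENNReal.ofReal_add (by norm_num) (by positivity), ENNReal.ofReal_ofNat,
      ENNReal.ofReal_mul (by norm_num : (0:ℝ) ≤ 2), ENNReal.ofReal_ofNat]
    ring
  have hJm : ∫⁻ x, ENNReal.ofReal ((Real.exp (2⁻¹ * l x) - 1) ^ 2) ∂μ
      = ENNReal.ofReal (2 - 2 * ρ) := by
    have hpt : ∀ x, ENNReal.ofReal ((Real.exp (2⁻¹ * l x) - 1) ^ 2)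
          + ENNReal.ofReal (Real.exp (2⁻¹ * l x)) * 2
        = ENNReal.ofReal (Real.exp (l x)) + 1 := by
      intro x
      rw [← ENNReal.ofReal_ofNat 2, ← ENNReal.ofReal_mul (Real.exp_nonneg _),
        ← ENNReal.ofReal_add (sq_nonneg _) (by positivity),
        ← ENNReal.ofReal_one, ← ENNReal.ofReal_add (Real.exp_nonneg _) zero_le_one]
      congr 1
      rw [← hsq x]
      ring
    have key : ∫⁻ x, ENNReal.ofReal ((Real.exp (2⁻¹ * l x) - 1) ^ 2) ∂μ
        + ENNReal.ofReal ρ * 2 = 2 := by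
      rw [← hIq, ← lintegral_mul_const _ hqmeas,
        ← lintegral_add_right _ (hqmeas.mul_const _)]
      simp_rw [hpt]
      rw [lintegral_add_right _ measurable_const, hIR, lintegral_one, measure_univ]
      ring
    have hfin : ENNReal.ofReal ρ * 2 ≠ ⊤ := by finiteness
    rw [ENNReal.eq_sub_of_add_eq hfin key,
      ENNReal.ofReal_sub _ (by positivity),
      ENNReal.ofReal_ofNat, ENNReal.ofReal_mul (by norm_num : (0:ℝ) ≤ 2),
      ENNReal.ofReal_ofNat, mul_comm]

  -- total variation style bound
  have hT02 : ∫⁻ x, (ENNReal.ofReal (Real.exp (l x)) - 1) ∂μ ≤ ENNReal.ofReal 0.02 := by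
    have hptT : ∀ x, ENNReal.ofReal (Real.exp (l x)) - 1
        ≤ ENNReal.ofReal |Real.exp (2⁻¹ * l x) - 1|
          * ENNReal.ofReal (Real.exp (2⁻¹ * l x) + 1) := by
      intro x
      rw [← ENNReal.ofReal_one, ← ENNReal.ofReal_sub _ zero_le_one,
        ← ENNReal.ofReal_mul (abs_nonneg _)]
      apply ENNReal.ofReal_le_ofReal
      have hfac : Real.exp (l x) - 1
          = (Real.exp (2⁻¹ * l x) - 1) * (Real.exp (2⁻¹ * l x) + 1) := by
        rw [← hsq x]; ring
      rw [hfac]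
      exact mul_le_mul_of_nonneg_right (le_abs_self _) (by positivity)
    have hf1 : Measurable fun x => ENNReal.ofReal |Real.exp (2⁻¹ * l x) - 1| :=
      ((hlm.const_mul _).exp.sub_const 1).abs.ennreal_ofReal
    have hf2 : Measurable fun x => ENNReal.ofReal (Real.exp (2⁻¹ * l x) + 1) :=
      ((hlm.const_mul _).exp.add_const 1).ennreal_ofReal
    have hold := ENNReal.lintegral_mul_le_Lp_mul_Lq μ
      (p := 2) (q := 2) ⟨by norm_num, by norm_num, by norm_num⟩ hf1.aemeasurable hf2.aemeasurable
    simp only [Pi.mul_apply] at hold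
    have e1 : ∀ x : Fin d → ℝ, (ENNReal.ofReal |Real.exp (2⁻¹ * l x) - 1|) ^ (2:ℝ)
        = ENNReal.ofReal ((Real.exp (2⁻¹ * l x) - 1) ^ 2) := by
      intro x
      rw [ENNReal.ofReal_rpow_of_nonneg (abs_nonneg _) (by norm_num)]
      congr 1
      rw [show (2:ℝ) = ((2:ℕ):ℝ) by norm_num, Real.rpow_natCast, sq_abs]
    have e2 : ∀ x : Fin d → ℝ, (ENNReal.ofReal (Real.exp (2⁻¹ * l x) + 1)) ^ (2:ℝ)
        = ENNReal.ofReal ((Real.exp (2⁻¹ * l x) + 1) ^ 2) := by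
      intro x
      rw [ENNReal.ofReal_rpow_of_nonneg (by positivity) (by norm_num)]
      congr 1
      rw [show (2:ℝ) = ((2:ℕ):ℝ) by norm_num, Real.rpow_natCast]
    simp only [e1, e2, hJm, hJp] at hold
    have h2ρm : (0:ℝ) ≤ 2 - 2 * ρ := by linarith
    have h2ρp : (0:ℝ) ≤ 2 + 2 * ρ := by linarith
    have hrw : ENNReal.ofReal (2 - 2 * ρ) ^ (1/(2:ℝ))
          * ENNReal.ofReal (2 + 2 * ρ) ^ (1/(2:ℝ))
        = ENNReal.ofReal ((2 - 2*ρ) ^ ((1:ℝ)/2) * (2 + 2*ρ) ^ ((1:ℝ)/2)) := by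
      rw [ENNReal.ofReal_rpow_of_nonneg h2ρm (by norm_num),
        ENNReal.ofReal_rpow_of_nonneg h2ρp (by norm_num),
        ← ENNReal.ofReal_mul (by positivity)]
    have hρsq : ρ ^ 2 = Real.exp (-(c / (4 * s))) := by
      rw [hρ, sq, ← Real.exp_add]
      congr 1
      field_simp
      ring
    have hreal : (2 - 2*ρ) ^ ((1:ℝ)/2) * (2 + 2*ρ) ^ ((1:ℝ)/2) ≤ 0.02 := by
      rw [← Real.sqrt_eq_rpow, ← Real.sqrt_eq_rpow, ← Real.sqrt_mul h2ρm]
      have hcs : c / s ≤ 0.0004 := (div_le_iff₀ hs).mpr (by linarith)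
      have hexp := Real.add_one_le_exp (-(c / (4 * s)))
      have hy : c / s = 4 * (c / (4 * s)) := by field_simp
      have hin : (2 - 2*ρ) * (2 + 2*ρ) ≤ 0.0004 := by nlinarith [hρsq, hexp, hcs, hy]
      calc Real.sqrt ((2 - 2*ρ) * (2 + 2*ρ)) ≤ Real.sqrt 0.0004 :=
            Real.sqrt_le_sqrt hin
        _ = 0.02 := by
            rw [show (0.0004:ℝ) = 0.02 ^ 2 by norm_num, Real.sqrt_sq (by norm_num)]
    calc ∫⁻ x, (ENNReal.ofReal (Real.exp (l x)) - 1) ∂μ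
        ≤ ∫⁻ x, ENNReal.ofReal |Real.exp (2⁻¹ * l x) - 1|
            * ENNReal.ofReal (Real.exp (2⁻¹ * l x) + 1) ∂μ := lintegral_mono hptT
      _ ≤ ENNReal.ofReal (2 - 2 * ρ) ^ (1/(2:ℝ))
            * ENNReal.ofReal (2 + 2 * ρ) ^ (1/(2:ℝ)) := hold
      _ = ENNReal.ofReal ((2 - 2*ρ) ^ ((1:ℝ)/2) * (2 + 2*ρ) ^ ((1:ℝ)/2)) := hrw
      _ ≤ ENNReal.ofReal 0.02 := ENNReal.ofReal_le_ofReal hreal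
  -- shift bound
  have hshift : ν A ≤ μ A + ENNReal.ofReal 0.02 := by
    rw [hνA]
    calc ∫⁻ x in A, ENNReal.ofReal (Real.exp (l x)) ∂μ
        ≤ ∫⁻ x in A, (1 + (ENNReal.ofReal (Real.exp (l x)) - 1)) ∂μ :=
          lintegral_mono fun x => by rw [add_comm]; exact le_tsub_add
      _ = μ A + ∫⁻ x in A, (ENNReal.ofReal (Real.exp (l x)) - 1) ∂μ := by
          rw [lintegral_add_left measurable_const, setLIntegral_one]
      _ ≤ μ A + ∫⁻ x, (ENNReal.ofReal (Real.exp (l x)) - 1) ∂μ :=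
          add_le_add_right (setLIntegral_le_lintegral _ _) _
      _ ≤ μ A + ENNReal.ofReal 0.02 := add_le_add_right hT02 _
  -- final arithmetic
  have hfinal : (1:ℝ≥0∞) ≤ 4 * μ A + ENNReal.ofReal 0.04 := by
    calc (1:ℝ≥0∞) ≤ μ S1 + μ A + (μ S3 + μ S4) := hone
      _ = ν A + μ A + (ν A + μ A) := by rw [hS3, hS4, hS1]
      _ ≤ (μ A + ENNReal.ofReal 0.02) + μ A + ((μ A + ENNReal.ofReal 0.02) + μ A) :=
          add_le_add (add_le_add_left hshift _) (add_le_add_left hshift _)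
      _ = 4 * μ A + (ENNReal.ofReal 0.02 + ENNReal.ofReal 0.02) := by ring
      _ = 4 * μ A + ENNReal.ofReal 0.04 := by
          rw [← ENNReal.ofReal_add (by norm_num) (by norm_num)]
          norm_num
  have hμA_ne : μ A ≠ ⊤ := measure_ne_top μ A
  have hμA_eq : μ A = ENNReal.ofReal (μ A).toReal := (ENNReal.ofReal_toReal hμA_ne).symm
  have hcomb : ENNReal.ofReal (4 * (μ A).toReal + 0.04)
      = 4 * μ A + ENNReal.ofReal 0.04 := by
    rw [ENNReal.ofReal_add (by positivity) (by norm_num),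
      ENNReal.ofReal_mul (by norm_num : (0:ℝ) ≤ 4), ENNReal.ofReal_toReal hμA_ne,
      ENNReal.ofReal_ofNat]
  rw [← hcomb] at hfinal
  have hreal1 : (1:ℝ) ≤ 4 * (μ A).toReal + 0.04 := by
    by_contra hlt
    push_neg at hlt
    have := ENNReal.ofReal_lt_one.mpr hlt
    exact absurd (lt_of_le_of_lt hfinal this) (lt_irrefl _)
  have hp24 : (0.24:ℝ) ≤ (μ A).toReal := by linarith
  calc ENNReal.ofReal 0.24 ≤ ENNReal.ofReal (μ A).toReal := ENNReal.ofReal_le_ofReal hp24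
    _ = μ A := ENNReal.ofReal_toReal hμA_ne
end
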